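/- Let f : ℝ → ℝ be continuous and 2π-periodic with Fourier coefficients c_k := (1/2π)∫₀^{2π} f(α)e^{-ikα} dα, and let ω₀ ∈ ℝ be such that f(α) ≠ ω₀² for every α. Fix x ∈ ℝ and set b_m := 1 for m ≠ 0 and b_0 := 1 + x. Then there exists a nonzero u = (u_m)_{m∈ℤ} ∈ ℓ²(ℤ, ℂ) satisfying b_m ∑_{n∈ℤ} c_{m−n} u_n = ω₀² u_m for every m ∈ ℤ if and only if (x/2π)∫₀^{2π} f(α)/(ω₀² − f(α)) dα = 1. -/

import Mathlib

open scoped Real ComplexConjugate InnerProductSpace ENNReal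
open MeasureTheory Complex

namespace Stmt6

variable {T : ℝ} [hT : Fact (0 < T)]

local notation "μh" => (AddCircle.haarAddCircle : Measure (AddCircle T))

lemma integral_fourier (n : ℤ) : (∫ z, fourier n z ∂μh) = if n = 0 then 1 else 0 := by
  rcases eq_or_ne n 0 with rfl | hn
  · simp only [if_pos rfl]
    calc (∫ z, fourier (0:ℤ) z ∂μh) = ∫ _, (1:ℂ) ∂μh := by
          refine integral_congr_ae (Filter.Eventually.of_forall fun z => fourier_zero)
      _ = 1 := by simp
  · have h := (orthonormal_fourier (T := T)).2 (show (0:ℤ) ≠ n from Ne.symm hn)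
    have h' : ⟪(fourierLp 2 0 : Lp ℂ 2 μh), (fourierLp 2 n : Lp ℂ 2 μh)⟫_ℂ = 0 := h
    rw [MeasureTheory.L2.inner_def] at h'
    rw [if_neg hn, ← h']
    refine integral_congr_ae ?_
    filter_upwards [coeFn_fourierLp (T := T) 2 0, coeFn_fourierLp (T := T) 2 n] with z h0 h1
    rw [RCLike.inner_apply, h0, h1, fourier_zero, map_one, mul_one]

lemma fourierCoeff_const (k : ℂ) (n : ℤ) :
    fourierCoeff (fun _ : AddCircle T => k) n = if n = 0 then k else 0 := by
  have h : fourierCoeff (fun _ : AddCircle T => k) n = (∫ z, fourier (-n) z ∂μh) * k := by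
    rw [fourierCoeff]
    simp_rw [smul_eq_mul]
    rw [integral_mul_const]
  rcases eq_or_ne n 0 with rfl | hn
  · rw [h, integral_fourier]; simp
  · rw [h, integral_fourier, if_neg hn, if_neg (neg_ne_zero.mpr hn), zero_mul]

/-- Key convolution identity. -/
lemma key_hasSum (Φ : C(AddCircle T, ℂ)) (hΦ : ∀ z, conj (Φ z) = Φ z)
    (U : Lp ℂ 2 μh) (m : ℤ) :
    HasSum (fun n : ℤ => fourierCoeff (⇑Φ) (m - n) * fourierCoeff (⇑U) n)
      (fourierCoeff (fun z => Φ z * U z) m) := by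
  classical
  set Wc : C(AddCircle T, ℂ) := Φ * fourier m with hWc
  set W : Lp ℂ 2 μh := ContinuousMap.toLp 2 μh ℂ Wc with hW
  have hWcoe : ∀ᵐ z ∂μh, W z = Φ z * fourier m z := by
    filter_upwards [ContinuousMap.coeFn_toLp (p := 2) (μ := μh) (𝕜 := ℂ) Wc] with z hz
    rw [hz]; rfl
  have hinner : ∀ V : Lp ℂ 2 μh,
      ⟪W, V⟫_ℂ = ∫ z, Φ z * fourier (-m) z * V z ∂μh := by
    intro V
    rw [MeasureTheory.L2.inner_def]
    refine integral_congr_ae ?_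
    filter_upwards [hWcoe] with z hz
    rw [RCLike.inner_apply, hz, map_mul, hΦ z, ← fourier_neg, mul_comm]
  have h1 : ⟪W, U⟫_ℂ = fourierCoeff (fun z => Φ z * U z) m := by
    rw [hinner U, fourierCoeff]
    refine integral_congr_ae (Filter.Eventually.of_forall fun z => ?_)
    simp only [smul_eq_mul]; ring
  have h2 : ∀ n : ℤ, ⟪W, (fourierLp 2 n : Lp ℂ 2 μh)⟫_ℂ = fourierCoeff (⇑Φ) (m - n) := by
    intro n
    rw [hinner, fourierCoeff]
    refine integral_congr_ae ?_
    filter_upwards [coeFn_fourierLp (T := T) 2 n] with z hz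
    rw [hz, smul_eq_mul]
    have : fourier (-m) z * fourier n z = fourier (-(m - n)) z := by
      rw [← fourier_add]; congr 1; ring
    rw [mul_assoc, this]; ring
  have h3 := hasSum_fourier_series_L2 U
  have h4 := (innerSL ℂ W).hasSum h3
  simp only [innerSL_apply_apply, inner_smul_right] at h4
  rw [h1] at h4
  refine h4.congr_fun fun n => ?_
  rw [h2 n, mul_comm]




lemma fourierCoeff_congr_ae {A B : AddCircle T → ℂ} (h : A =ᵐ[μh] B) (n : ℤ) :
    fourierCoeff A n = fourierCoeff B n :=
  integral_congr_ae (by filter_upwards [h] with z hz; rw [hz])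

lemma norm_fourier_le (n : ℤ) (z : AddCircle T) : ‖fourier n z‖ ≤ 1 := by
  rw [fourier_apply]
  exact le_of_eq (Circle.norm_coe _)

lemma integrable_fourier_smul {U : AddCircle T → ℂ} (hU : Integrable U μh) (n : ℤ) :
    Integrable (fun z => fourier n z • U z) μh := by
  simp_rw [smul_eq_mul]
  exact hU.bdd_mul ((map_continuous (fourier n)).aestronglyMeasurable)
    (Filter.Eventually.of_forall fun z => norm_fourier_le n z)

lemma fourierCoeff_sub' {A B : AddCircle T → ℂ} (hA : Integrable A μh)
    (hB : Integrable B μh) (n : ℤ) :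
    fourierCoeff (fun z => A z - B z) n = fourierCoeff A n - fourierCoeff B n := by
  simp_rw [fourierCoeff, smul_sub]
  exact integral_sub (integrable_fourier_smul hA (-n)) (integrable_fourier_smul hB (-n))

lemma coeffs_zero {V : Lp ℂ 2 μh} (h : ∀ n : ℤ, fourierCoeff (⇑V) n = 0) : V = 0 := by
  apply fourierBasis.repr.injective
  apply lp.ext
  funext i
  rw [fourierBasis_repr, h i, map_zero, lp.coeFn_zero, Pi.zero_apply]

lemma memL2_mul (Φ : C(AddCircle T, ℂ)) {U : AddCircle T → ℂ} (hU : MemLp U 2 μh) :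
    MemLp (fun z => Φ z * U z) 2 μh :=
  hU.of_le_mul (Φ.continuous.aestronglyMeasurable.mul hU.1)
    (Filter.Eventually.of_forall fun z => by
      rw [norm_mul]
      exact mul_le_mul_of_nonneg_right (Φ.norm_coe_le_norm z) (norm_nonneg _))

lemma contMap_integrable (H : C(AddCircle T, ℂ)) : Integrable (⇑H) μh := by
  have h := (integrable_const (1 : ℂ) (μ := μh)).bdd_mul
    H.continuous.aestronglyMeasurable (Filter.Eventually.of_forall fun z => H.norm_coe_le_norm z)
  simpa using h

lemma integrable_mul_L2 (Φ : C(AddCircle T, ℂ)) (U : Lp ℂ 2 μh) :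
    Integrable (fun z => Φ z * U z) μh :=
  (memLp_one_iff_integrable.mp ((Lp.memLp U).mono_exponent (by norm_num))).bdd_mul
    Φ.continuous.aestronglyMeasurable (Filter.Eventually.of_forall fun z => Φ.norm_coe_le_norm z)


end Stmt6

open Stmt6

/-- equation (4.2): single-defect characterization of localized
modes.  A nonzero ℓ² eigenmode of the singly defected chain at frequency ω₀ with
ω₀² avoiding the band exists iff (x/2π)∫₀^{2π} f(α)/(ω₀² − f(α)) dα = 1. -/
theorem stmt_6
    (f : ℝ → ℝ)
    (hf_cont : Continuous f)
    (hf_per : Function.Periodic f (2 * π))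
    (c : ℤ → ℂ)
    (hc : ∀ k : ℤ, c k = (1 / (2 * π)) * ∫ α in (0:ℝ)..(2 * π),
      ((f α : ℂ)) * Complex.exp (-(Complex.I) * (k : ℂ) * (α : ℂ)))
    (ω₀ : ℝ) (hω₀ : ∀ α : ℝ, f α ≠ ω₀ ^ 2)
    (x : ℝ)
    (b : ℤ → ℝ)
    (hb : ∀ m : ℤ, b m = if m = 0 then 1 + x else 1) :
    (∃ u : ℤ → ℂ, u ≠ 0 ∧ (Summable fun m : ℤ => ‖u m‖ ^ 2) ∧
        ∀ m : ℤ, (Summable fun n : ℤ => c (m - n) * u n) ∧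
          (b m : ℂ) * ∑' n : ℤ, c (m - n) * u n = ((ω₀ : ℂ)) ^ 2 * u m) ↔
      (x / (2 * π)) * ∫ α in (0:ℝ)..(2 * π), f α / (ω₀ ^ 2 - f α) = 1 := by
  have h2π : (0:ℝ) < 2 * π := by positivity
  haveI : Fact (0 < 2 * π) := ⟨h2π⟩
  set F : AddCircle (2 * π) → ℝ := hf_per.lift with hF
  have hFcont : Continuous F := hf_cont.quotient_liftOn' _
  have hFcoe : ∀ α : ℝ, F (α : AddCircle (2 * π)) = f α := fun α => hf_per.lift_coe α
  have hFne : ∀ z, ω₀ ^ 2 - F z ≠ 0 := by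
    intro z
    induction z using QuotientAddGroup.induction_on with
    | H α => rw [hFcoe]; exact sub_ne_zero.mpr (Ne.symm (hω₀ α))
  set FC : C(AddCircle (2 * π), ℂ) :=
    ⟨fun z => ((F z : ℝ) : ℂ), Complex.continuous_ofReal.comp hFcont⟩ with hFC
  set D : C(AddCircle (2 * π), ℂ) :=
    ⟨fun z => (((ω₀ ^ 2 - F z : ℝ)) : ℂ),
      Complex.continuous_ofReal.comp (continuous_const.sub hFcont)⟩ with hD
  set Einv : C(AddCircle (2 * π), ℂ) :=
    ⟨fun z => ((((ω₀ ^ 2 - F z)⁻¹ : ℝ)) : ℂ),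
      Complex.continuous_ofReal.comp ((continuous_const.sub hFcont).inv₀ hFne)⟩ with hEinv
  have hconjF : ∀ z, conj (FC z) = FC z := fun z => Complex.conj_ofReal _
  have hconjE : ∀ z, conj (Einv z) = Einv z := fun z => Complex.conj_ofReal _
  have hDE : ∀ z, D z * Einv z = 1 := by
    intro z
    simp only [hD, hEinv, ContinuousMap.coe_mk]
    rw [← Complex.ofReal_mul, mul_inv_cancel₀ (hFne z), Complex.ofReal_one]
  -- translation of c
  have hcF : ∀ k : ℤ, c k = fourierCoeff (⇑FC) k := by
    intro k
    rw [hc k, fourierCoeff_eq_intervalIntegral (⇑FC) k 0, zero_add, Complex.real_smul]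
    congr 1
    · push_cast; ring
    · refine intervalIntegral.integral_congr fun α hα => ?_
      simp only [hFC, ContinuousMap.coe_mk]
      rw [fourier_coe_apply, smul_eq_mul, hFcoe, mul_comm]
      congr 1
      congr 1
      have hπ : (π : ℂ) ≠ 0 := Complex.ofReal_ne_zero.mpr Real.pi_ne_zero
      push_cast
      field_simp
  -- the band integral
  have hI : fourierCoeff (fun z => FC z * Einv z) 0
      = (((1 / (2 * π)) * ∫ α in (0:ℝ)..(2 * π), f α / (ω₀ ^ 2 - f α) : ℝ) : ℂ) := by
    rw [fourierCoeff_eq_intervalIntegral _ 0 0, zero_add]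
    have h1 : (∫ α in (0:ℝ)..(2 * π), fourier (-0) (α : AddCircle (2 * π)) • (FC α * Einv α))
        = ∫ α in (0:ℝ)..(2 * π), ((f α / (ω₀ ^ 2 - f α) : ℝ) : ℂ) := by
      refine intervalIntegral.integral_congr fun α hα => ?_
      rw [neg_zero, fourier_zero, one_smul]
      simp only [hFC, hEinv, ContinuousMap.coe_mk]
      rw [hFcoe, ← Complex.ofReal_mul, ← div_eq_mul_inv]
    rw [h1, intervalIntegral.integral_ofReal, Complex.real_smul, ← Complex.ofReal_mul]
  constructor
  · -- forward direction
    rintro ⟨u, hune, husum, hueq⟩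
    have hmem : Memℓp u 2 := by
      refine memℓp_gen ?_
      have : ∀ i : ℤ, ‖u i‖ ^ ((2:ℝ≥0∞).toReal) = ‖u i‖ ^ (2:ℕ) := by
        intro i
        rw [ENNReal.toReal_ofNat, ← Real.rpow_natCast]
        norm_num
      exact (summable_congr this).mpr husum
    set uu : lp (fun _ : ℤ => ℂ) 2 := ⟨u, hmem⟩ with huu
    set U : Lp ℂ 2 (AddCircle.haarAddCircle : Measure (AddCircle (2 * π))) :=
      fourierBasis.repr.symm uu with hU
    have hUrepr : ∀ n : ℤ, fourierCoeff (⇑U) n = u n := by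
      intro n
      rw [← fourierBasis_repr, hU, LinearIsometryEquiv.apply_symm_apply]
    -- convolution identity
    have hconv : ∀ m : ℤ, HasSum (fun n : ℤ => c (m - n) * u n)
        (fourierCoeff (fun z => FC z * U z) m) := by
      intro m
      have h := key_hasSum FC hconjF U m
      refine h.congr_fun fun n => ?_
      rw [hcF, hUrepr]
    set κ : ℂ := fourierCoeff (fun z => FC z * U z) 0 with hκ
    have hEq : ∀ m : ℤ, fourierCoeff (fun z => FC z * U z) m
        = ((ω₀ : ℂ)) ^ 2 * u m - (if m = 0 then (x : ℂ) * κ else 0) := by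
      intro m
      have heq := (hueq m).2
      rw [(hconv m).tsum_eq] at heq
      rcases eq_or_ne m 0 with rfl | hm
      · rw [if_pos rfl]
        rw [hb 0, if_pos rfl] at heq
        push_cast at heq ⊢
        linear_combination heq
      · rw [if_neg hm]
        rw [hb m, if_neg hm] at heq
        push_cast at heq ⊢
        linear_combination heq
    -- the candidate solution
    set G : C(AddCircle (2 * π), ℂ) := ((x : ℂ) * κ) • Einv with hG
    set Y : Lp ℂ 2 (AddCircle.haarAddCircle : Measure (AddCircle (2 * π))) :=
      ContinuousMap.toLp 2 AddCircle.haarAddCircle ℂ G with hY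
    have hGapp : ∀ z, G z = ((x : ℂ) * κ) * Einv z := fun z => rfl
    set V : Lp ℂ 2 (AddCircle.haarAddCircle : Measure (AddCircle (2 * π))) := U - Y with hV
    have hVcoe : (⇑V : AddCircle (2 * π) → ℂ)
        =ᵐ[AddCircle.haarAddCircle] fun z => U z - G z := by
      filter_upwards [Lp.coeFn_sub U Y, ContinuousMap.coeFn_toLp (p := 2)
        (μ := (AddCircle.haarAddCircle : Measure (AddCircle (2 * π)))) (𝕜 := ℂ) G] with z h1 h2
      rw [hV, h1, Pi.sub_apply, hY, h2]
    have hDV : ∀ n : ℤ, fourierCoeff (fun z => D z * V z) n = 0 := by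
      intro n
      have e1 : fourierCoeff (fun z => D z * V z) n
          = fourierCoeff (fun z => D z * U z - (x : ℂ) * κ) n := by
        refine fourierCoeff_congr_ae ?_ n
        filter_upwards [hVcoe] with z hz
        rw [hz, mul_sub]
        congr 1
        rw [hGapp, ← mul_assoc, mul_comm (D z), mul_assoc, hDE, mul_one]
      have e2 : fourierCoeff (fun z => D z * U z) n
          = ((ω₀ : ℂ)) ^ 2 * u n - fourierCoeff (fun z => FC z * U z) n := by
        have e3 : fourierCoeff (fun z => D z * U z) n
            = fourierCoeff (fun z => ((ω₀ : ℂ)) ^ 2 * U z - FC z * U z) n := by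
          refine fourierCoeff_congr_ae (Filter.Eventually.of_forall fun z => ?_) n
          simp only [hD, hFC, ContinuousMap.coe_mk]
          push_cast
          ring
        have hUint : Integrable (⇑U) (AddCircle.haarAddCircle : Measure (AddCircle (2 * π))) :=
          memLp_one_iff_integrable.mp ((Lp.memLp U).mono_exponent (by norm_num))
        rw [e3, fourierCoeff_sub' (hUint.const_mul _) (integrable_mul_L2 FC U) n]
        congr 1
        rw [show (fun z => ((ω₀ : ℂ)) ^ 2 * U z) = (fun z => ((ω₀ : ℂ)) ^ 2 * (⇑U) z) from rfl,
          fourierCoeff.const_mul, hUrepr]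
      rw [e1, fourierCoeff_sub' (integrable_mul_L2 D U) (integrable_const _), e2, hEq n,
        fourierCoeff_const]
      rcases eq_or_ne n 0 with rfl | hn
      · simp
      · simp [hn]
    -- D·V as an L² element with vanishing coefficients
    have hW2 : MemLp (fun z => D z * V z) 2
        (AddCircle.haarAddCircle : Measure (AddCircle (2 * π))) :=
      memL2_mul D (Lp.memLp V)
    set Z : Lp ℂ 2 (AddCircle.haarAddCircle : Measure (AddCircle (2 * π))) :=
      hW2.toLp _ with hZ
    have hZcoeff : ∀ n : ℤ, fourierCoeff (⇑Z) n = 0 := by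
      intro n
      rw [fourierCoeff_congr_ae hW2.coeFn_toLp n]
      exact hDV n
    have hVzero : ∀ m : ℤ, fourierCoeff (⇑V) m = 0 := by
      intro m
      have h := key_hasSum Einv hconjE Z m
      have h0 : (fun n : ℤ => fourierCoeff (⇑Einv) (m - n) * fourierCoeff (⇑Z) n)
          = fun _ => (0 : ℂ) := by
        funext n; rw [hZcoeff, mul_zero]
      rw [h0] at h
      have hS : fourierCoeff (fun z => Einv z * Z z) m = 0 := (hasSum_zero.unique h).symm
      have e : fourierCoeff (⇑V) m = fourierCoeff (fun z => Einv z * Z z) m := by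
        refine fourierCoeff_congr_ae ?_ m
        filter_upwards [hW2.coeFn_toLp] with z hz
        rw [hz, ← mul_assoc, mul_comm (Einv z) (D z), hDE, one_mul]
      rw [e, hS]
    have hUY : U = Y := sub_eq_zero.mp (coeffs_zero hVzero)
    have hGcoe : (⇑Y : AddCircle (2 * π) → ℂ)
        =ᵐ[(AddCircle.haarAddCircle : Measure (AddCircle (2 * π)))] ⇑G := by
      rw [hY]
      exact ContinuousMap.coeFn_toLp (p := 2)
        (μ := (AddCircle.haarAddCircle : Measure (AddCircle (2 * π)))) (𝕜 := ℂ) G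
    have hEcoeff : fourierCoeff (⇑G) = fun n => ((x : ℂ) * κ) * fourierCoeff (⇑Einv) n := by
      funext n
      have : (⇑G : AddCircle (2 * π) → ℂ) = fun z => ((x : ℂ) * κ) * Einv z := rfl
      rw [this, fourierCoeff.const_mul]
    have hu : ∀ n : ℤ, u n = (x : ℂ) * κ * fourierCoeff (⇑Einv) n := by
      intro n
      rw [← hUrepr n, hUY, fourierCoeff_congr_ae hGcoe n, hEcoeff]
    have hκI : κ = (x : ℂ) * κ * fourierCoeff (fun z => FC z * Einv z) 0 := by
      have e1 : fourierCoeff (fun z => FC z * U z) 0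
          = fourierCoeff (fun z => FC z * G z) 0 := by
        refine fourierCoeff_congr_ae ?_ 0
        have := hGcoe
        rw [← hUY] at this
        filter_upwards [this] with z hz
        rw [hz]
      have e2 : (fun z => FC z * G z) = fun z => ((x : ℂ) * κ) * (FC z * Einv z) := by
        funext z
        show FC z * (((x : ℂ) * κ) * Einv z) = _
        ring
      calc κ = fourierCoeff (fun z => FC z * U z) 0 := hκ
        _ = fourierCoeff (fun z => FC z * G z) 0 := e1
        _ = (x : ℂ) * κ * fourierCoeff (fun z => FC z * Einv z) 0 := by
            rw [e2, fourierCoeff.const_mul]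
    have hκne : κ ≠ 0 := by
      intro h0
      apply hune
      funext n
      rw [hu n, h0, mul_zero, zero_mul]
      rfl
    have hxI : (x : ℂ) * fourierCoeff (fun z => FC z * Einv z) 0 = 1 := by
      have h1 : ((x : ℂ) * fourierCoeff (fun z => FC z * Einv z) 0) * κ = 1 * κ := by
        rw [one_mul]
        nth_rewrite 2 [hκI]
        ring
      exact mul_right_cancel₀ hκne h1
    rw [hI] at hxI
    have hr : x * ((1 / (2 * π)) * ∫ α in (0:ℝ)..(2 * π), f α / (ω₀ ^ 2 - f α)) = 1 := by
      exact_mod_cast hxI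
    calc x / (2 * π) * ∫ α in (0:ℝ)..(2 * π), f α / (ω₀ ^ 2 - f α)
        = x * ((1 / (2 * π)) * ∫ α in (0:ℝ)..(2 * π), f α / (ω₀ ^ 2 - f α)) := by ring
      _ = 1 := hr
  · -- reverse direction
    intro hI1
    set U : Lp ℂ 2 (AddCircle.haarAddCircle : Measure (AddCircle (2 * π))) :=
      ContinuousMap.toLp 2 AddCircle.haarAddCircle ℂ Einv with hU
    have hUG : (⇑U : AddCircle (2 * π) → ℂ)
        =ᵐ[(AddCircle.haarAddCircle : Measure (AddCircle (2 * π)))] ⇑Einv := by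
      rw [hU]
      exact ContinuousMap.coeFn_toLp (p := 2)
        (μ := (AddCircle.haarAddCircle : Measure (AddCircle (2 * π)))) (𝕜 := ℂ) Einv
    have hUcoeff : ∀ n : ℤ, fourierCoeff (⇑U) n = fourierCoeff (⇑Einv) n := fun n =>
      fourierCoeff_congr_ae hUG n
    set u : ℤ → ℂ := fun n => fourierCoeff (⇑Einv) n with hudef
    -- coefficient computation
    have e1 : ∀ m : ℤ, fourierCoeff (fun z => FC z * U z) m
        = ((ω₀ : ℂ)) ^ 2 * u m - (if m = 0 then 1 else 0) := by
      intro m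
      have e2 : fourierCoeff (fun z => FC z * U z) m
          = fourierCoeff (fun z => ((ω₀ : ℂ)) ^ 2 * Einv z - 1) m := by
        refine fourierCoeff_congr_ae ?_ m
        filter_upwards [hUG] with z hz
        rw [hz]
        simp only [hEinv, hFC, ContinuousMap.coe_mk]
        have hr : F z * (ω₀ ^ 2 - F z)⁻¹ = ω₀ ^ 2 * (ω₀ ^ 2 - F z)⁻¹ - 1 := by
          have hnz := hFne z
          field_simp
          ring
        calc ((F z : ℝ) : ℂ) * (((ω₀ ^ 2 - F z)⁻¹ : ℝ) : ℂ)
            = ((F z * (ω₀ ^ 2 - F z)⁻¹ : ℝ) : ℂ) := by push_cast; ring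
          _ = ((ω₀ ^ 2 * (ω₀ ^ 2 - F z)⁻¹ - 1 : ℝ) : ℂ) := by rw [hr]
          _ = ((ω₀ : ℂ)) ^ 2 * (((ω₀ ^ 2 - F z)⁻¹ : ℝ) : ℂ) - 1 := by push_cast; ring
      rw [e2, fourierCoeff_sub' ((contMap_integrable Einv).const_mul _) (integrable_const _) m,
        fourierCoeff.const_mul, fourierCoeff_const]
    have hIc : fourierCoeff (fun z => FC z * Einv z) 0 = ((ω₀ : ℂ)) ^ 2 * u 0 - 1 := by
      have := e1 0
      rw [if_pos rfl] at this
      rw [← this]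
      refine fourierCoeff_congr_ae ?_ 0
      filter_upwards [hUG] with z hz
      rw [hz]
    have hxc : (x : ℂ) * (((ω₀ : ℂ)) ^ 2 * u 0 - 1) = 1 := by
      rw [← hIc, hI, ← Complex.ofReal_mul, ← Complex.ofReal_one]
      refine Complex.ofReal_inj.mpr ?_
      linear_combination hI1
    refine ⟨u, ?_, ?_, ?_⟩
    · -- nonzero
      intro h0
      have hUz : U = 0 := coeffs_zero fun n => by
        rw [hUcoeff n]
        exact congrFun h0 n
      have hae : (⇑Einv : AddCircle (2 * π) → ℂ)
          =ᵐ[(AddCircle.haarAddCircle : Measure (AddCircle (2 * π)))] fun _ => 0 := by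
        have h2 : (⇑U : AddCircle (2 * π) → ℂ)
            =ᵐ[(AddCircle.haarAddCircle : Measure (AddCircle (2 * π)))] fun _ => 0 := by
          rw [hUz]
          exact Lp.coeFn_zero ℂ 2 _
        exact hUG.symm.trans h2
      have heq : (⇑Einv : AddCircle (2 * π) → ℂ) = fun _ => 0 :=
        (Einv.continuous.ae_eq_iff_eq
          (μ := (AddCircle.haarAddCircle : Measure (AddCircle (2 * π))))
          continuous_const).mp hae
      have hz0 := congrFun heq (0 : AddCircle (2 * π))
      simp only [hEinv, ContinuousMap.coe_mk] at hz0
      exact Complex.ofReal_ne_zero.mpr (inv_ne_zero (hFne 0)) hz0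
    · -- summability
      have hmem := lp.memℓp (fourierBasis.repr U)
      have hs := (memℓp_gen_iff (p := 2) (by norm_num)).mp hmem
      refine (summable_congr fun m => ?_).mp hs
      rw [fourierBasis_repr, hUcoeff m]
      rw [ENNReal.toReal_ofNat, ← Real.rpow_natCast]
      norm_num
      rfl
    · -- the eigenmode equations
      intro m
      have h := key_hasSum FC hconjF U m
      have h' : HasSum (fun n : ℤ => c (m - n) * u n)
          (fourierCoeff (fun z => FC z * U z) m) := by
        refine h.congr_fun fun n => ?_
        rw [hcF, hUcoeff]
      refine ⟨h'.summable, ?_⟩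
      rw [h'.tsum_eq, e1 m, hb m]
      rcases eq_or_ne m 0 with rfl | hm
      · rw [if_pos rfl, if_pos rfl]
        push_cast
        linear_combination hxc
      · rw [if_neg hm, if_neg hm]
        push_cast
        ring
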